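/- arXiv:1903.06444 — 6 statements merged into one kernel-verified Lean document; each statement's English description precedes it below -/
import Mathlib

section
/- Let A, E ∈ ℝ^{n×n} with E = Eᵀ positive definite, A = Aᵀ negative definite, and EA = AE, and let B ∈ ℝ^{n×m}. Set P := -A^{-1}E^{-1}. Then P is symmetric positive definite and (A + B Bᵀ A^{-1})ᵀ P E + E P (A + B Bᵀ A^{-1}) = -2I - 2 A^{-1} B Bᵀ A^{-1}, which is negative definite. -/
open Matrix

lemma posDef_of_posSemidef_isUnit {k : ℕ} {M : Matrix (Fin k) (Fin k) ℝ}
    (h : M.PosSemidef) (hu : IsUnit M) : M.PosDef := by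
  refine posDef_iff_dotProduct_mulVec.mpr ⟨h.1, fun x hx => (h.dotProduct_mulVec_nonneg x).lt_of_ne' fun h0 => hx ?_⟩
  have hz : M *ᵥ x = 0 := (h.dotProduct_mulVec_zero_iff x).mp h0
  have hinj := Matrix.mulVec_injective_iff_isUnit.mpr hu
  have : M *ᵥ x = M *ᵥ 0 := by simpa using hz
  simpa using hinj this

lemma posDef_mul_of_commute {k : ℕ} {M N : Matrix (Fin k) (Fin k) ℝ}
    (hM : M.PosDef) (hN : N.PosDef) (hc : M * N = N * M) : (M * N).PosDef := by
  have hherm : (M * N).IsHermitian := by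
    rw [Matrix.IsHermitian, conjTranspose_mul, hM.isHermitian.eq, hN.isHermitian.eq, hc]
  have hNMN : (N * M * N).PosSemidef := by
    have := hM.posSemidef.conjTranspose_mul_mul_same N
    rwa [hN.isHermitian.eq] at this
  have heig : ∀ i, 0 ≤ hherm.eigenvalues i := by
    intro i
    set v : Fin k → ℝ := ⇑(hherm.eigenvectorBasis i) with hv
    have hvne : v ≠ 0 := by
      have := hherm.eigenvectorBasis.orthonormal.ne_zero i
      intro hcon
      apply this
      ext j
      exact congrFun hcon j
    have hev : (M * N) *ᵥ v = hherm.eigenvalues i • v := hherm.mulVec_eigenvectorBasis i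
    have key : star v ⬝ᵥ (N * M * N) *ᵥ v = hherm.eigenvalues i * (star v ⬝ᵥ N *ᵥ v) := by
      rw [mul_assoc, ← Matrix.mulVec_mulVec, hev, Matrix.mulVec_smul, dotProduct_smul,
        smul_eq_mul]
    have h1 : 0 ≤ hherm.eigenvalues i * (star v ⬝ᵥ N *ᵥ v) := key ▸ hNMN.dotProduct_mulVec_nonneg v
    have h2 : 0 < star v ⬝ᵥ N *ᵥ v := hN.dotProduct_mulVec_pos hvne
    rw [mul_comm] at h1
    exact nonneg_of_mul_nonneg_right h1 h2
  have hps : (M * N).PosSemidef := hherm.posSemidef_iff_eigenvalues_nonneg.mpr heig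
  refine posDef_of_posSemidef_isUnit hps ?_
  exact (hM.isUnit).mul hN.isUnit

theorem lyapunov_identity {n m : ℕ}
    (A E : Matrix (Fin n) (Fin n) ℝ) (B : Matrix (Fin n) (Fin m) ℝ)
    (hE : E.PosDef) (hA : (-A).PosDef) (hAsym : Aᵀ = A) (hcomm : E * A = A * E) :
    let P := -(A⁻¹ * E⁻¹)
    P.PosDef ∧
      (A + B * Bᵀ * A⁻¹)ᵀ * P * E + E * P * (A + B * Bᵀ * A⁻¹)
        = -(2 : ℝ) • (1 : Matrix (Fin n) (Fin n) ℝ) - (2 : ℝ) • (A⁻¹ * B * Bᵀ * A⁻¹) ∧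
      (-((A + B * Bᵀ * A⁻¹)ᵀ * P * E + E * P * (A + B * Bᵀ * A⁻¹))).PosDef := by
  intro P
  -- basic invertibility facts
  have hAdet : IsUnit A.det := by
    have := hA.isUnit
    have : IsUnit A := by simpa using this.neg
    exact (Matrix.isUnit_iff_isUnit_det A).mp this
  have hEdet : IsUnit E.det := (Matrix.isUnit_iff_isUnit_det E).mp hE.isUnit
  have hAA : A * A⁻¹ = 1 := Matrix.mul_nonsing_inv A hAdet
  have hAA' : A⁻¹ * A = 1 := Matrix.nonsing_inv_mul A hAdet
  have hEE : E * E⁻¹ = 1 := Matrix.mul_nonsing_inv E hEdet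
  have hEE' : E⁻¹ * E = 1 := Matrix.nonsing_inv_mul E hEdet
  -- inverses commute
  have hinvcomm : A⁻¹ * E⁻¹ = E⁻¹ * A⁻¹ := by
    have h1 : (E * A)⁻¹ = A⁻¹ * E⁻¹ := Matrix.mul_inv_rev E A
    have h2 : (A * E)⁻¹ = E⁻¹ * A⁻¹ := Matrix.mul_inv_rev A E
    rw [← h1, ← h2, hcomm]
  have hEAinv : E * A⁻¹ = A⁻¹ * E := by
    calc E * A⁻¹ = A⁻¹ * (A * (E * A⁻¹)) := by rw [← mul_assoc, hAA', one_mul]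
    _ = A⁻¹ * (A * E * A⁻¹) := by rw [mul_assoc A E A⁻¹]
    _ = A⁻¹ * (E * A * A⁻¹) := by rw [hcomm]
    _ = A⁻¹ * (E * (A * A⁻¹)) := by rw [mul_assoc]
    _ = A⁻¹ * E := by rw [hAA, mul_one]
  -- P is PosDef
  have hAneg_inv : (-A)⁻¹ = -(A⁻¹) := by
    refine Matrix.inv_eq_right_inv ?_
    rw [Matrix.neg_mul, Matrix.mul_neg, neg_neg, hAA]
  have hPdef : P.PosDef := by
    have hmc : (-A) * E = E * (-A) := by
      rw [Matrix.neg_mul, Matrix.mul_neg, hcomm]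
    have hMN : ((-A) * E).PosDef := posDef_mul_of_commute hA hE hmc
    have : (((-A) * E)⁻¹).PosDef := hMN.inv
    have heq : ((-A) * E)⁻¹ = P := by
      rw [Matrix.mul_inv_rev, hAneg_inv, Matrix.mul_neg, ← Matrix.neg_mul,
        show P = -(A⁻¹ * E⁻¹) from rfl, hinvcomm, Matrix.neg_mul]
    rwa [heq] at this
  -- transpose facts
  have hAinvT : (A⁻¹)ᵀ = A⁻¹ := by rw [Matrix.transpose_nonsing_inv, hAsym]
  have hPE : P * E = -A⁻¹ := by
    show -(A⁻¹ * E⁻¹) * E = -A⁻¹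
    rw [Matrix.neg_mul, Matrix.mul_assoc, hEE', Matrix.mul_one]
  have hEP : E * P = -A⁻¹ := by
    show E * -(A⁻¹ * E⁻¹) = -A⁻¹
    rw [Matrix.mul_neg, ← Matrix.mul_assoc, hEAinv, Matrix.mul_assoc, hEE, Matrix.mul_one]
  have hT : (A + B * Bᵀ * A⁻¹)ᵀ = A + A⁻¹ * (B * Bᵀ) := by
    rw [Matrix.transpose_add, hAsym, Matrix.transpose_mul, Matrix.transpose_mul,
      Matrix.transpose_transpose, hAinvT]
  have hmain : (A + B * Bᵀ * A⁻¹)ᵀ * P * E + E * P * (A + B * Bᵀ * A⁻¹)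
      = -(2 : ℝ) • (1 : Matrix (Fin n) (Fin n) ℝ) - (2 : ℝ) • (A⁻¹ * B * Bᵀ * A⁻¹) := by
    rw [hT, Matrix.mul_assoc, hPE, hEP]
    have e1 : A⁻¹ * (B * Bᵀ) * A⁻¹ = A⁻¹ * B * Bᵀ * A⁻¹ := by
      rw [Matrix.mul_assoc A⁻¹ B Bᵀ]
    have e2 : A⁻¹ * (B * Bᵀ * A⁻¹) = A⁻¹ * B * Bᵀ * A⁻¹ := by
      rw [← Matrix.mul_assoc, e1]
    have lhs_eq : (A + A⁻¹ * (B * Bᵀ)) * -A⁻¹ + -A⁻¹ * (A + B * Bᵀ * A⁻¹)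
        = -(1 + 1) - (A⁻¹ * B * Bᵀ * A⁻¹ + A⁻¹ * B * Bᵀ * A⁻¹) := by
      simp only [Matrix.add_mul, Matrix.mul_add, Matrix.mul_neg, Matrix.neg_mul, hAA, hAA',
        e1, e2]
      abel
    rw [lhs_eq]
    congr 1
    · rw [neg_smul, ← Nat.cast_ofNat (n := 2), Nat.cast_smul_eq_nsmul, two_smul]
    · rw [← Nat.cast_ofNat (n := 2), Nat.cast_smul_eq_nsmul, two_smul]
  refine ⟨hPdef, hmain, ?_⟩
  rw [hmain]
  have : -((-(2 : ℝ)) • (1 : Matrix (Fin n) (Fin n) ℝ) - (2 : ℝ) • (A⁻¹ * B * Bᵀ * A⁻¹))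
      = (2 : ℝ) • (1 : Matrix (Fin n) (Fin n) ℝ) + (2 : ℝ) • ((A⁻¹ * B) * (A⁻¹ * B)ᵀ) := by
    have e3 : (A⁻¹ * B) * (A⁻¹ * B)ᵀ = A⁻¹ * B * Bᵀ * A⁻¹ := by
      rw [Matrix.transpose_mul, hAinvT, ← Matrix.mul_assoc]
    rw [e3, neg_sub, neg_smul, sub_neg_eq_add, add_comm]
  rw [this]
  have h1 : ((2 : ℝ) • (1 : Matrix (Fin n) (Fin n) ℝ)).PosDef := by
    rw [← Nat.cast_ofNat (n := 2), Nat.cast_smul_eq_nsmul]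
    have : ((2 : ℕ) • (1 : Matrix (Fin n) (Fin n) ℝ)) = (2 : ℕ) := by
      simp [Matrix.smul_one_eq_diagonal]
    rw [this]
    exact Matrix.PosDef.natCast 2 (by norm_num)
  have h2 : ((2 : ℝ) • ((A⁻¹ * B) * (A⁻¹ * B)ᵀ)).PosSemidef := by
    have hps : ((A⁻¹ * B) * (A⁻¹ * B)ᵀ).PosSemidef := by
      simpa using Matrix.posSemidef_self_mul_conjTranspose (A⁻¹ * B)
    rw [← Nat.cast_ofNat (n := 2), Nat.cast_smul_eq_nsmul, two_smul]
    exact hps.add hps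
  exact h1.add_posSemidef h2
end

section
/- Let A ∈ ℝ^{n×n} be symmetric negative definite and B ∈ ℝ^{n×m}. Then every eigenvalue of A + B Bᵀ A^{-1} has strictly negative real part (i.e., A + B Bᵀ A^{-1} is Hurwitz). -/
open Matrix

open Complex

set_option maxHeartbeats 1000000


private lemma star_dot_self' {k : ℕ} (w : Fin k → ℂ) :
    star w ⬝ᵥ w = ((∑ i, Complex.normSq (w i) : ℝ) : ℂ) := by
  push_cast
  refine Finset.sum_congr rfl fun i _ => ?_
  simp [Complex.normSq_eq_conj_mul_self, RCLike.star_def]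

private lemma posdef_complex {n : ℕ} {P : Matrix (Fin n) (Fin n) ℝ} (hP : P.PosDef)
    {v : Fin n → ℂ} (hv : v ≠ 0) :
    ∃ r : ℝ, 0 < r ∧ star v ⬝ᵥ (P.map (algebraMap ℝ ℂ)) *ᵥ v = (r : ℂ) := by
  classical
  set f := algebraMap ℝ ℂ with hf
  set a : Fin n → ℝ := fun i => (v i).re with ha
  set b : Fin n → ℝ := fun i => (v i).im with hb
  have hPt : Pᵀ = P := by
    ext i j
    have := congrFun (congrFun hP.1 i) j
    simpa using this
  have hv' : v = (fun i => ((a i : ℝ) : ℂ)) + I • (fun i => ((b i : ℝ) : ℂ)) := by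
    funext i
    simp [ha, hb, Pi.smul_apply]
    rw [mul_comm]
    exact (Complex.re_add_im (v i)).symm
  have hstar : star v = (fun i => ((a i : ℝ) : ℂ)) - I • (fun i => ((b i : ℝ) : ℂ)) := by
    funext i
    rw [Pi.star_apply]
    nth_rewrite 1 [hv']
    simp [Complex.conj_ofReal, sub_eq_add_neg]
  have hmap : ∀ x y : Fin n → ℝ,
      (fun i => ((x i : ℝ) : ℂ)) ⬝ᵥ (P.map f) *ᵥ (fun i => ((y i : ℝ) : ℂ))
        = ((x ⬝ᵥ P *ᵥ y : ℝ) : ℂ) := by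
    intro x y
    have h1 : (P.map f) *ᵥ (fun i => ((y i : ℝ) : ℂ)) = fun i => (((P *ᵥ y) i : ℝ) : ℂ) := by
      funext i
      exact (RingHom.map_mulVec f P y i).symm
    rw [h1]
    exact (RingHom.map_dotProduct f x (P *ᵥ y)).symm
  have hsymd : a ⬝ᵥ P *ᵥ b = b ⬝ᵥ P *ᵥ a := by
    rw [dotProduct_mulVec]
    nth_rewrite 1 [← hPt]
    rw [vecMul_transpose, dotProduct_comm]
  have hcalc : star v ⬝ᵥ (P.map f) *ᵥ v = ((a ⬝ᵥ P *ᵥ a + b ⬝ᵥ P *ᵥ b : ℝ) : ℂ) := by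
    rw [hstar]
    nth_rewrite 1 [hv']
    simp only [mulVec_add, mulVec_smul, dotProduct_add, dotProduct_smul,
      sub_dotProduct, smul_dotProduct, hmap, smul_eq_mul]
    rw [hsymd]
    push_cast
    ring_nf
    simp [Complex.I_sq]
  refine ⟨a ⬝ᵥ P *ᵥ a + b ⬝ᵥ P *ᵥ b, ?_, hcalc⟩
  have hab : a ≠ 0 ∨ b ≠ 0 := by
    by_contra h
    push_neg at h
    apply hv
    funext i
    have h1 := congrFun h.1 i
    have h2 := congrFun h.2 i
    simp only [ha, hb, Pi.zero_apply] at h1 h2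
    exact Complex.ext h1 h2
  have key : ∀ x : Fin n → ℝ, 0 ≤ x ⬝ᵥ P *ᵥ x := by
    intro x
    simpa using hP.posSemidef.dotProduct_mulVec_nonneg x
  have keypos : ∀ x : Fin n → ℝ, x ≠ 0 → 0 < x ⬝ᵥ P *ᵥ x := by
    intro x hx
    simpa using hP.dotProduct_mulVec_pos hx
  rcases hab with h | h
  · have := keypos a h; have := key b; linarith
  · have := keypos b h; have := key a; linarith

theorem hurwitz_of_symmetric_negdef {n m : ℕ}
    (A : Matrix (Fin n) (Fin n) ℝ) (B : Matrix (Fin n) (Fin m) ℝ)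
    (hA : (-A).PosDef) (hAsym : Aᵀ = A) :
    ∀ μ ∈ spectrum ℂ ((A + B * Bᵀ * A⁻¹).map (algebraMap ℝ ℂ)), μ.re < 0 := by
  classical
  intro μ hμ
  set f := algebraMap ℝ ℂ with hf
  set M := A + B * Bᵀ * A⁻¹ with hM
  have hdet : IsUnit A.det := by
    have h1 : (0:ℝ) < (-A).det := hA.det_pos
    have h2 : (-A).det = (-1:ℝ)^(Fintype.card (Fin n)) * A.det := det_neg A
    refine isUnit_iff_ne_zero.2 fun h => ?_
    rw [h2, h, mul_zero] at h1
    exact lt_irrefl _ h1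
  have hA2 : A⁻¹ * A = 1 := nonsing_inv_mul A hdet
  have hAinvT : (A⁻¹)ᵀ = A⁻¹ := by rw [transpose_nonsing_inv, hAsym]
  set P := -A⁻¹ with hPdef
  have hPpos : P.PosDef := by
    have h := hA.inv
    have he : (-A)⁻¹ = -A⁻¹ := inv_eq_right_inv
      (by rw [neg_mul_neg, mul_nonsing_inv A hdet])
    rwa [he] at h
  rw [spectrum.mem_iff] at hμ
  have hdet0 : (algebraMap ℂ (Matrix (Fin n) (Fin n) ℂ) μ - M.map f).det = 0 := by
    by_contra h
    exact hμ ((isUnit_iff_isUnit_det _).2 (isUnit_iff_ne_zero.2 h))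
  obtain ⟨v, hv0, hveq⟩ := (Matrix.exists_mulVec_eq_zero_iff).2 hdet0
  have heig : (M.map f) *ᵥ v = μ • v := by
    rw [sub_mulVec, Algebra.algebraMap_eq_smul_one, smul_mulVec, one_mulVec,
      sub_eq_zero] at hveq
    exact hveq.symm
  -- real matrix identity
  set C := A⁻¹ * B with hC
  have hCt : Cᵀ = Bᵀ * A⁻¹ := by rw [hC, transpose_mul, hAinvT]
  have h2 : P * M = -1 - C * Cᵀ := by
    have hcc : C * Cᵀ = A⁻¹ * (B * Bᵀ * A⁻¹) := by
      rw [hC, hCt, Matrix.mul_assoc, Matrix.mul_assoc]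
    rw [hM, hPdef, hcc, neg_mul, mul_add, neg_add, ← sub_eq_add_neg, hA2]
  -- complex side
  set Pc := P.map f with hPc
  set Cc := C.map f with hCc
  set c := star v ⬝ᵥ Pc *ᵥ v with hc
  have lhs2 : star v ⬝ᵥ ((P * M).map f *ᵥ v) = μ * c := by
    rw [Matrix.map_mul, ← hPc, ← mulVec_mulVec, heig, mulVec_smul, dotProduct_smul]
    simp [smul_eq_mul, hc]
  set w := Ccᵀ *ᵥ v with hw
  have hCcH : (Ccᵀ)ᴴ = Cc := by
    ext i j
    simp [hCc, conjTranspose_apply, transpose_apply, Matrix.map_apply, hf, Complex.conj_ofReal]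
  have rhs : star v ⬝ᵥ (((-1 - C * Cᵀ) : Matrix (Fin n) (Fin n) ℝ).map f *ᵥ v)
      = -(star v ⬝ᵥ v) - star w ⬝ᵥ w := by
    have hmm : (C * Cᵀ).map f = Cc * Ccᵀ := by
      rw [Matrix.map_mul, Matrix.transpose_map, ← hCc]
    have hneg1 : ((-1 : Matrix (Fin n) (Fin n) ℝ)).map f = (-1 : Matrix (Fin n) (Fin n) ℂ) := by
      ext i j
      simp [Matrix.map_apply, Matrix.one_apply, apply_ite f]
    have hmapid : ((-1 - C * Cᵀ) : Matrix (Fin n) (Fin n) ℝ).map f = -1 - Cc * Ccᵀ := by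
      rw [Matrix.map_sub f (fun a b => map_sub f a b), hmm, hneg1]
    rw [hmapid, sub_mulVec, neg_mulVec, one_mulVec, dotProduct_sub, dotProduct_neg]
    congr 1
    rw [← mulVec_mulVec, dotProduct_mulVec, hw]
    have hsw : star w = star v ᵥ* Cc := by rw [hw, star_mulVec, hCcH]
    rw [← hsw]
  rw [h2] at lhs2
  have key : μ * c = -(star v ⬝ᵥ v) - star w ⬝ᵥ w := lhs2.symm.trans rhs
  obtain ⟨r, hr, hcr⟩ := posdef_complex hPpos hv0
  have hcr' : c = (r : ℂ) := by rw [hc, hPc, hf]; exact hcr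
  have hvs : star v ⬝ᵥ v = ((∑ i, Complex.normSq (v i) : ℝ) : ℂ) := star_dot_self' v
  have hws : star w ⬝ᵥ w = ((∑ i, Complex.normSq (w i) : ℝ) : ℂ) := star_dot_self' w
  set s := ∑ i, Complex.normSq (v i) with hs
  set t := ∑ i, Complex.normSq (w i) with ht
  have hspos : 0 < s := by
    obtain ⟨i, hi⟩ := Function.ne_iff.1 hv0
    exact Finset.sum_pos' (fun j _ => Complex.normSq_nonneg _)
      ⟨i, Finset.mem_univ i, Complex.normSq_pos.mpr hi⟩
  have htnn : 0 ≤ t := Finset.sum_nonneg fun j _ => Complex.normSq_nonneg _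
  rw [hcr', hvs, hws] at key
  have hre := congrArg Complex.re key
  simp only [Complex.mul_re, Complex.sub_re, Complex.neg_re,
    Complex.ofReal_re, Complex.ofReal_im, mul_zero, zero_mul, sub_zero] at hre
  nlinarith [hre, hr, hspos, htnn]
end

section
/- Let M ∈ ℝ^{n×n} and P ∈ ℝ^{n×n} with P symmetric positive definite and Mᵀ P + P M negative definite. Then every eigenvalue of M has strictly negative real part. -/
open Matrix ComplexOrder

lemma posDef_map_complex {n : ℕ} {P : Matrix (Fin n) (Fin n) ℝ} (hP : P.PosDef) :
    (P.map (algebraMap ℝ ℂ)).PosDef := by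
  have hsym : Pᵀ = P := hP.1
  refine Matrix.PosDef.of_dotProduct_mulVec_pos ?_ ?_
  · exact hP.1.map (algebraMap ℝ ℂ) (by intro a; simp [Complex.conj_ofReal])
  · intro v hv
    set x : Fin n → ℝ := fun i => (v i).re with hx
    set y : Fin n → ℝ := fun i => (v i).im with hy
    have key : star v ⬝ᵥ ((P.map (algebraMap ℝ ℂ)) *ᵥ v)
        = ((x ⬝ᵥ P *ᵥ x + y ⬝ᵥ P *ᵥ y : ℝ) : ℂ)
          + ((x ⬝ᵥ P *ᵥ y - y ⬝ᵥ P *ᵥ x : ℝ) : ℂ) * Complex.I := by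
      have expand : ∀ (a b : Fin n → ℝ),
          ((a ⬝ᵥ P *ᵥ b : ℝ) : ℂ) = ∑ i, ∑ j, (a i : ℂ) * ((P i j : ℂ) * (b j : ℂ)) := by
        intro a b
        simp [dotProduct, mulVec, Finset.mul_sum]
      rw [Complex.ofReal_add, Complex.ofReal_sub, expand, expand, expand, expand]
      simp only [dotProduct, mulVec, Pi.star_apply, map_apply, Finset.mul_sum]
      rw [sub_mul, Finset.sum_mul, Finset.sum_mul, ← Finset.sum_add_distrib,
        ← Finset.sum_sub_distrib, ← Finset.sum_add_distrib]
      refine Finset.sum_congr rfl fun i _ => ?_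
      rw [Finset.sum_mul, Finset.sum_mul, ← Finset.sum_add_distrib,
        ← Finset.sum_sub_distrib, ← Finset.sum_add_distrib]
      refine Finset.sum_congr rfl fun j _ => ?_
      apply Complex.ext <;>
        simp [Complex.mul_re, Complex.mul_im, hx, hy] <;> ring
    have hxy : x ⬝ᵥ P *ᵥ y = y ⬝ᵥ P *ᵥ x := by
      nth_rewrite 1 [← hsym]
      rw [dotProduct_mulVec, vecMul_transpose, dotProduct_comm]
    have hnn : ∀ z : Fin n → ℝ, 0 ≤ z ⬝ᵥ P *ᵥ z := by
      intro z
      by_cases hz : z = 0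
      · simp [hz]
      · exact le_of_lt (by simpa using hP.dotProduct_mulVec_pos hz)
    have hpos : 0 < x ⬝ᵥ P *ᵥ x + y ⬝ᵥ P *ᵥ y := by
      have : x ≠ 0 ∨ y ≠ 0 := by
        by_contra h
        push_neg at h
        apply hv
        funext i
        have := congrFun h.1 i
        have := congrFun h.2 i
        exact Complex.ext (by simpa [hx] using congrFun h.1 i)
          (by simpa [hy] using congrFun h.2 i)
      rcases this with h | h
      · have := hP.dotProduct_mulVec_pos h
        simp only [star_trivial] at this
        have hxx : 0 < x ⬝ᵥ P *ᵥ x := by simpa using this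
        linarith [hnn y]
      · have := hP.dotProduct_mulVec_pos h
        have hyy : 0 < y ⬝ᵥ P *ᵥ y := by simpa using this
        linarith [hnn x]
    rw [key, hxy, sub_self]
    simp only [Complex.ofReal_zero, zero_mul, add_zero]
    exact_mod_cast hpos

theorem lyapunov_implies_hurwitz {n : ℕ}
    (M P : Matrix (Fin n) (Fin n) ℝ)
    (hP : P.PosDef) (hL : (-(Mᵀ * P + P * M)).PosDef) :
    ∀ μ ∈ spectrum ℂ (M.map (algebraMap ℝ ℂ)), μ.re < 0 := by
  intro μ hμ
  set Mc := M.map (algebraMap ℝ ℂ) with hMc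
  set Pc := P.map (algebraMap ℝ ℂ) with hPc
  -- obtain eigenvector
  rw [← AlgEquiv.spectrum_eq (Matrix.toLinAlgEquiv' (R := ℂ) (n := Fin n)),
    ← Module.End.hasEigenvalue_iff_mem_spectrum] at hμ
  obtain ⟨v, hv⟩ := hμ.exists_hasEigenvector
  have hv0 : v ≠ 0 := hv.2
  have heig : Mc *ᵥ v = μ • v := by
    have := hv.apply_eq_smul
    simpa [Matrix.toLinAlgEquiv'_apply] using this
  -- star of eigenvector equation
  have hstar : Mc *ᵥ star v = star (Mc *ᵥ v) := by
    funext i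
    simp only [mulVec, dotProduct, Pi.star_apply, star_sum, star_mul']
    refine Finset.sum_congr rfl fun j _ => ?_
    simp [hMc, Complex.conj_ofReal, mul_comm]
  have hPcPD := posDef_map_complex hP
  have hLc : ((-(Mᵀ * P + P * M)).map (algebraMap ℝ ℂ)).PosDef := posDef_map_complex hL
  have hmap : ((-(Mᵀ * P + P * M)).map (algebraMap ℝ ℂ)) = -(Mcᵀ * Pc + Pc * Mc) := by
    ext i j
    simp only [hMc, hPc, Matrix.map_apply, Matrix.neg_apply, Matrix.add_apply,
      Matrix.mul_apply, Matrix.transpose_apply]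
    push_cast
    ring
  rw [hmap] at hLc
  set c := star v ⬝ᵥ (Pc *ᵥ v) with hc
  have hcpos : 0 < c := hPcPD.dotProduct_mulVec_pos hv0
  have hs : 0 < star v ⬝ᵥ ((-(Mcᵀ * Pc + Pc * Mc)) *ᵥ v) := hLc.dotProduct_mulVec_pos hv0
  have hterm1 : star v ⬝ᵥ ((Pc * Mc) *ᵥ v) = μ * c := by
    rw [← mulVec_mulVec, heig, mulVec_smul, dotProduct_smul, hc, smul_eq_mul]
  have hterm2 : star v ⬝ᵥ ((Mcᵀ * Pc) *ᵥ v) = (starRingEnd ℂ) μ * c := by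
    rw [← mulVec_mulVec, dotProduct_mulVec, vecMul_transpose, hstar, heig]
    rw [star_smul, smul_dotProduct, smul_eq_mul, Complex.star_def, ← hc]
  have hsum : star v ⬝ᵥ ((-(Mcᵀ * Pc + Pc * Mc)) *ᵥ v)
      = -((starRingEnd ℂ) μ * c + μ * c) := by
    rw [neg_mulVec, dotProduct_neg, add_mulVec, dotProduct_add, hterm1, hterm2]
  rw [hsum] at hs
  rw [Complex.lt_def] at hs hcpos
  simp only [Complex.zero_re, Complex.zero_im] at hs hcpos
  have him : c.im = 0 := hcpos.2.symm
  have : (-((starRingEnd ℂ) μ * c + μ * c)).re = -(2 * μ.re * c.re) := by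
    simp [Complex.add_re, Complex.mul_re, him]
    ring
  rw [this] at hs
  nlinarith [hcpos.1, hs.1]
end

section
/- Let a > 0 and let g > 0 satisfy the three inequalities 2a² + 1 - g^{-1} ≥ 0, 1 - g^{-1} ≥ 0, and (1 - g^{-1})(2a² + 1 - g^{-1}) - a² ≥ 0. Then for every ω ∈ ℝ, the Hermitian 2×2 matrix [[ω²·a²/(a²+1) + 2a² + 1 - g^{-1}, -a(1 - iω)], [-a(1 + iω), ω² + 1 - g^{-1}]] is positive semidefinite. -/
open Matrix
open scoped ComplexOrder

lemma psd2 (p r : ℝ) (q : ℂ) (hp : 0 ≤ p) (hr : 0 ≤ r)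
    (hd : Complex.normSq q ≤ p * r) :
    (!![(p:ℂ), q; (starRingEnd ℂ) q, (r:ℂ)]).PosSemidef := by
  rw [Matrix.posSemidef_iff_dotProduct_mulVec]
  constructor
  · ext i j
    fin_cases i <;> fin_cases j <;>
      simp [Matrix.conjTranspose_apply, Complex.conj_ofReal]
  · intro x
    have hx : star x ⬝ᵥ (!![(p:ℂ), q; (starRingEnd ℂ) q, (r:ℂ)]) *ᵥ x
        = (starRingEnd ℂ) (x 0) * ((p:ℂ) * x 0 + q * x 1)
          + (starRingEnd ℂ) (x 1) * ((starRingEnd ℂ) q * x 0 + (r:ℂ) * x 1) := by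
      simp [Matrix.mulVec, dotProduct, Fin.sum_univ_two, mul_comm]
    rw [hx]
    set z0 := x 0; set z1 := x 1
    rw [Complex.le_def]
    constructor
    · simp only [Complex.add_re, Complex.mul_re, Complex.mul_im, Complex.add_im,
        Complex.conj_re, Complex.conj_im, Complex.ofReal_re, Complex.ofReal_im, Complex.zero_re]
      have h := Complex.normSq_apply q
      rcases hp.eq_or_lt with hp0 | hp0
      · obtain ⟨h1q, h2q⟩ : q.re = 0 ∧ q.im = 0 := by
          constructor <;> nlinarith [sq_nonneg q.re, sq_nonneg q.im]
        simp only [h1q, h2q, ← hp0]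
        nlinarith [mul_nonneg hr (sq_nonneg z1.re), mul_nonneg hr (sq_nonneg z1.im)]
      · have key : 0 ≤ (p * z0.re + q.re * z1.re - q.im * z1.im)^2
            + (p * z0.im + q.re * z1.im + q.im * z1.re)^2
            + (p * r - Complex.normSq q) * (z1.re^2 + z1.im^2) := by
          have := sub_nonneg.2 hd
          positivity
        nlinarith [sq_nonneg (p * z0.re + q.re * z1.re - q.im * z1.im),
        sq_nonneg (p * z0.im + q.im * z1.re + q.re * z1.im),
        sq_nonneg z1.re, sq_nonneg z1.im, sq_nonneg z0.re, sq_nonneg z0.im,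
        mul_nonneg hp hr, mul_nonneg (mul_nonneg hp hr) (sq_nonneg z1.re),
        mul_nonneg (mul_nonneg hp hr) (sq_nonneg z1.im),
        mul_nonneg hp (sq_nonneg z1.re), mul_nonneg hp (sq_nonneg z1.im)]
    · simp only [Complex.add_im, Complex.mul_re, Complex.mul_im, Complex.add_re,
        Complex.conj_re, Complex.conj_im, Complex.ofReal_re, Complex.ofReal_im,
        Complex.zero_im, Complex.zero_re]
      ring

theorem example3_psd (a g : ℝ) (ha : 0 < a) (hg : 0 < g)
    (h1 : 0 ≤ 2 * a ^ 2 + 1 - g⁻¹) (h2 : 0 ≤ 1 - g⁻¹)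
    (h3 : 0 ≤ (1 - g⁻¹) * (2 * a ^ 2 + 1 - g⁻¹) - a ^ 2) :
    ∀ ω : ℝ,
      (!![((ω ^ 2 * a ^ 2 / (a ^ 2 + 1) + 2 * a ^ 2 + 1 - g⁻¹ : ℝ) : ℂ),
            -a * (1 - Complex.I * ω);
          -a * (1 + Complex.I * ω),
            ((ω ^ 2 + 1 - g⁻¹ : ℝ) : ℂ)] : Matrix (Fin 2) (Fin 2) ℂ).PosSemidef := by
  intro ω
  have hq : (starRingEnd ℂ) (-(a:ℂ) * (1 - Complex.I * ω)) = -a * (1 + Complex.I * ω) := by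
    simp [_root_.map_mul, Complex.conj_I]
  have hM : (!![((ω ^ 2 * a ^ 2 / (a ^ 2 + 1) + 2 * a ^ 2 + 1 - g⁻¹ : ℝ) : ℂ),
            -a * (1 - Complex.I * ω);
          -a * (1 + Complex.I * ω),
            ((ω ^ 2 + 1 - g⁻¹ : ℝ) : ℂ)] : Matrix (Fin 2) (Fin 2) ℂ)
      = !![((ω ^ 2 * a ^ 2 / (a ^ 2 + 1) + 2 * a ^ 2 + 1 - g⁻¹ : ℝ) : ℂ),
            -(a:ℂ) * (1 - Complex.I * ω);
          (starRingEnd ℂ) (-(a:ℂ) * (1 - Complex.I * ω)),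
            ((ω ^ 2 + 1 - g⁻¹ : ℝ) : ℂ)] := by
    rw [hq]
  rw [hM]
  have hden : (0:ℝ) < a ^ 2 + 1 := by positivity
  have ht : 0 ≤ ω ^ 2 * a ^ 2 / (a ^ 2 + 1) := by positivity
  apply psd2
  · nlinarith [sq_nonneg ω]
  · nlinarith [sq_nonneg ω]
  · have hns : Complex.normSq (-(a:ℂ) * (1 - Complex.I * ω)) = a ^ 2 * (1 + ω ^ 2) := by
      simp [Complex.normSq_apply, Complex.mul_re, Complex.mul_im]
      ring
    rw [hns]
    have hr0 : 0 ≤ ω ^ 2 + 1 - g⁻¹ := by nlinarith [sq_nonneg ω]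
    nlinarith [mul_nonneg ht hr0, sq_nonneg ω, sq_nonneg (a * ω),
      mul_nonneg (sq_nonneg a) (sq_nonneg ω), h3, h2, h1,
      mul_nonneg h2 (sq_nonneg ω)]
end

section
/- Let M ∈ ℂ^{k×k} be invertible, N ∈ ℂ^{k×m}, and set K = -N* M^{-*} and S = M M* + N N*. Then (M - N K)^{-1} = M* S^{-1}, and consequently the stacked matrix [I; K](M - NK)^{-1} equals [M*; -N*] S^{-1} and has spectral norm ‖S^{-1}‖^{1/2}. -/
open Matrix
open scoped ComplexOrder

/-- The spectral norm (ℓ²-operator norm) of a matrix. -/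
noncomputable def specNorm {𝕜 m n : Type*} [RCLike 𝕜] [Fintype m] [Fintype n] [DecidableEq n]
    (X : Matrix m n 𝕜) : ℝ := ‖(Matrix.toEuclideanLin X).toContinuousLinearMap‖

open scoped Matrix.Norms.L2Operator in
lemma specNorm_eq_l2norm {m n : Type*} [Fintype m] [Fintype n] [DecidableEq n]
    (X : Matrix m n ℂ) : specNorm X = ‖X‖ := rfl

lemma specNorm_nonneg {m n : Type*} [Fintype m] [Fintype n] [DecidableEq n]
    (X : Matrix m n ℂ) : 0 ≤ specNorm X := norm_nonneg _

open scoped Matrix.Norms.L2Operator in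
lemma specNorm_conjTranspose_mul_self {m n : Type*} [Fintype m] [Fintype n]
    [DecidableEq m] [DecidableEq n] (X : Matrix m n ℂ) :
    specNorm (Xᴴ * X) = specNorm X * specNorm X := by
  rw [specNorm_eq_l2norm, specNorm_eq_l2norm, Matrix.l2_opNorm_conjTranspose_mul_self]

lemma posDef_mul_conjTranspose_self_of_isUnit {n : Type*} [Fintype n] [DecidableEq n]
    {M : Matrix n n ℂ} (hM : IsUnit M) : (M * Mᴴ).PosDef := by
  refine PosDef.of_dotProduct_mulVec_pos (isHermitian_mul_conjTranspose_self M) fun x hx => ?_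
  have h1 : star x ᵥ* M = star (Mᴴ *ᵥ x) := by
    rw [star_mulVec, conjTranspose_conjTranspose]
  rw [← mulVec_mulVec, dotProduct_mulVec, h1]
  refine dotProduct_star_self_pos_iff.mpr fun h => hx ?_
  have hMH : IsUnit Mᴴ.det := by
    rw [Matrix.det_conjTranspose]
    exact ((isUnit_iff_isUnit_det M).mp hM).map (starRingEnd ℂ)
  have := congrArg (fun v => (Mᴴ)⁻¹ *ᵥ v) h
  simpa [mulVec_mulVec, Matrix.nonsing_inv_mul _ hMH] using this

theorem closed_loop_achieves_bound {k m : ℕ}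
    (M : Matrix (Fin k) (Fin k) ℂ) (N : Matrix (Fin k) (Fin m) ℂ) (hM : IsUnit M) :
    let K : Matrix (Fin m) (Fin k) ℂ := -(Nᴴ * (Mᴴ)⁻¹)
    let S : Matrix (Fin k) (Fin k) ℂ := M * Mᴴ + N * Nᴴ
    (M - N * K)⁻¹ = Mᴴ * S⁻¹ ∧
      fromRows (1 : Matrix (Fin k) (Fin k) ℂ) K * (M - N * K)⁻¹
        = fromRows Mᴴ (-Nᴴ) * S⁻¹ ∧
      specNorm (fromRows (1 : Matrix (Fin k) (Fin k) ℂ) K * (M - N * K)⁻¹)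
        = Real.sqrt (specNorm S⁻¹) := by
  intro K S
  have hMdet : IsUnit M.det := (isUnit_iff_isUnit_det M).mp hM
  have hMHdet : IsUnit Mᴴ.det := by
    rw [Matrix.det_conjTranspose]
    exact hMdet.map (starRingEnd ℂ)
  have hMMH : (M * Mᴴ).PosDef := posDef_mul_conjTranspose_self_of_isUnit hM
  have hS : S.PosDef := hMMH.add_posSemidef (posSemidef_self_mul_conjTranspose N)
  have hSdet : IsUnit S.det := (isUnit_iff_isUnit_det S).mp hS.isUnit
  have hEq : M - N * K = S * (Mᴴ)⁻¹ := by
    show M - N * -(Nᴴ * (Mᴴ)⁻¹) = (M * Mᴴ + N * Nᴴ) * (Mᴴ)⁻¹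
    rw [Matrix.mul_neg, sub_neg_eq_add, Matrix.add_mul, Matrix.mul_assoc,
      Matrix.mul_assoc, Matrix.mul_nonsing_inv _ hMHdet, Matrix.mul_one]
  have h1 : (M - N * K)⁻¹ = Mᴴ * S⁻¹ := by
    rw [hEq, Matrix.mul_inv_rev, Matrix.nonsing_inv_nonsing_inv _ hMHdet]
  have h2 : fromRows (1 : Matrix (Fin k) (Fin k) ℂ) K * (M - N * K)⁻¹
      = fromRows Mᴴ (-Nᴴ) * S⁻¹ := by
    have hKm : K * (Mᴴ * S⁻¹) = -Nᴴ * S⁻¹ := by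
      show -(Nᴴ * (Mᴴ)⁻¹) * (Mᴴ * S⁻¹) = -Nᴴ * S⁻¹
      rw [Matrix.neg_mul, Matrix.neg_mul, ← Matrix.mul_assoc, Matrix.mul_assoc (Nᴴ),
        Matrix.nonsing_inv_mul _ hMHdet, Matrix.mul_one]
    rw [h1, fromRows_mul, fromRows_mul, Matrix.one_mul, hKm]
  refine ⟨h1, h2, ?_⟩
  rw [h2]
  set X : Matrix (Fin k ⊕ Fin m) (Fin k) ℂ := fromRows Mᴴ (-Nᴴ) * S⁻¹ with hX
  have hXX : Xᴴ * X = S⁻¹ := by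
    rw [hX, conjTranspose_mul, conjTranspose_fromRows_eq_fromCols_conjTranspose,
      conjTranspose_nonsing_inv, hS.isHermitian.eq, conjTranspose_conjTranspose,
      conjTranspose_neg, conjTranspose_conjTranspose]
    rw [Matrix.mul_assoc, ← Matrix.mul_assoc (fromCols M (-N)), fromCols_mul_fromRows,
      Matrix.neg_mul, Matrix.mul_neg, neg_neg]
    show S⁻¹ * (S * S⁻¹) = S⁻¹
    rw [Matrix.mul_nonsing_inv _ hSdet, Matrix.mul_one]
  rw [← hXX, specNorm_conjTranspose_mul_self]
  rw [Real.sqrt_mul_self (specNorm_nonneg X)]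
end

section
/- Let A ∈ ℝ^{n×n} be symmetric negative definite and B ∈ ℝ^{n×m}, and set G = A² + B Bᵀ and F = A (i.e., E = I). Then for all ω ∈ ℝ, the real symmetric matrix ω² A G^{-1} A + G - ‖G^{-1}‖^{-1} I is positive semidefinite. -/
open Matrix

/-- Cauchy–Schwarz for a positive semidefinite real matrix. -/
lemma psd_cauchy_schwarz {k : ℕ} {G : Matrix (Fin k) (Fin k) ℝ} (hG : G.PosSemidef)
    (x y : Fin k → ℝ) :
    (x ⬝ᵥ (G *ᵥ y)) ^ 2 ≤ (x ⬝ᵥ (G *ᵥ x)) * (y ⬝ᵥ (G *ᵥ y)) := by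
  obtain ⟨B, rfl⟩ : ∃ B : Matrix (Fin k) (Fin k) ℝ, G = Bᴴ * B := by
    classical
    open scoped MatrixOrder Matrix.Norms.L2Operator in
    obtain ⟨X, hX, -, hXG⟩ := CFC.exists_sqrt_of_isSelfAdjoint_of_quasispectrumRestricts
      hG.isHermitian (QuasispectrumRestricts.nnreal_of_nonneg hG.nonneg)
    exact ⟨X, by rw [← hXG, Matrix.IsHermitian.eq hX]⟩
  have key : ∀ u v : Fin k → ℝ, u ⬝ᵥ ((Bᴴ * B) *ᵥ v) = (B *ᵥ u) ⬝ᵥ (B *ᵥ v) := by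
    intro u v
    rw [← Matrix.mulVec_mulVec, Matrix.dotProduct_mulVec u,
      Matrix.conjTranspose_eq_transpose_of_trivial, ← Matrix.mulVec_transpose,
      Matrix.transpose_transpose]
  rw [key, key, key]
  have := Finset.sum_mul_sq_le_sq_mul_sq Finset.univ (B *ᵥ x) (B *ᵥ y)
  simpa [dotProduct, pow_two] using this

/-- A positive definite matrix dominates `‖G⁻¹‖⁻¹ • 1`. -/
lemma key_lemma {k : ℕ} {G : Matrix (Fin k) (Fin k) ℝ} (hG : G.PosDef) :
    (G - (specNorm G⁻¹)⁻¹ • (1 : Matrix (Fin k) (Fin k) ℝ)).PosSemidef := by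
  set L := (Matrix.toEuclideanLin G⁻¹).toContinuousLinearMap with hL
  set N : ℝ := ‖L‖ with hN
  have hNnn : 0 ≤ N := norm_nonneg _
  refine Matrix.posSemidef_iff_dotProduct_mulVec.mpr ⟨?_, ?_⟩
  · show Matrix.IsHermitian (G - N⁻¹ • (1 : Matrix (Fin k) (Fin k) ℝ))
    rw [Matrix.IsHermitian, Matrix.conjTranspose_sub, Matrix.conjTranspose_smul,
      hG.isHermitian, Matrix.conjTranspose_one]
    norm_num
  · intro x
    have hx2 : star x = x := by simp
    rw [hx2, Matrix.sub_mulVec, dotProduct_sub, Matrix.smul_mulVec,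
      Matrix.one_mulVec, dotProduct_smul]
    have hq : (0:ℝ) ≤ x ⬝ᵥ (G *ᵥ x) := by simpa using hG.posSemidef.dotProduct_mulVec_nonneg x
    have ht : (0:ℝ) ≤ x ⬝ᵥ x := by simpa using dotProduct_star_self_nonneg x
    set v : EuclideanSpace ℝ (Fin k) := (WithLp.equiv 2 (Fin k → ℝ)).symm x with hv
    have hnormv : ‖v‖ ^ 2 = x ⬝ᵥ x := by
      rw [← real_inner_self_eq_norm_sq]
      simp only [v, PiLp.inner_apply, dotProduct, RCLike.inner_apply, mul_comm]
      simp
    have hLv : L v = (WithLp.equiv 2 (Fin k → ℝ)).symm (G⁻¹ *ᵥ x) := rfl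
    have hinner : x ⬝ᵥ (G⁻¹ *ᵥ x) = inner ℝ v (L v) := by
      rw [hLv]
      simp [v, PiLp.inner_apply, dotProduct, RCLike.inner_apply, mul_comm]
    have hbound : x ⬝ᵥ (G⁻¹ *ᵥ x) ≤ N * (x ⬝ᵥ x) := by
      rw [hinner]
      calc inner ℝ v (L v) ≤ ‖v‖ * ‖L v‖ := real_inner_le_norm _ _
        _ ≤ ‖v‖ * (N * ‖v‖) := by
            exact mul_le_mul_of_nonneg_left (L.le_opNorm v) (norm_nonneg v)
        _ = N * (x ⬝ᵥ x) := by rw [← hnormv]; ring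
    have hGy : G *ᵥ (G⁻¹ *ᵥ x) = x := by
      rw [Matrix.mulVec_mulVec, Matrix.mul_nonsing_inv _ hG.det_pos.ne'.isUnit,
        Matrix.one_mulVec]
    have hcs := psd_cauchy_schwarz hG.posSemidef x (G⁻¹ *ᵥ x)
    rw [hGy] at hcs
    have hcomm : (G⁻¹ *ᵥ x) ⬝ᵥ x = x ⬝ᵥ (G⁻¹ *ᵥ x) := dotProduct_comm _ _
    rw [hcomm] at hcs
    -- hcs : (x ⬝ᵥ x)^2 ≤ (x ⬝ᵥ G x) * (x ⬝ᵥ G⁻¹ x)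
    show (0:ℝ) ≤ x ⬝ᵥ (G *ᵥ x) - N⁻¹ • (x ⬝ᵥ x)
    rw [smul_eq_mul, sub_nonneg]
    set t : ℝ := x ⬝ᵥ x
    set q : ℝ := x ⬝ᵥ (G *ᵥ x)
    rcases eq_or_lt_of_le hNnn with hN0 | hNpos
    · rw [← hN0]; simpa using hq
    rcases eq_or_lt_of_le ht with ht0 | htpos
    · rw [← ht0]; simpa using hq
    have hu : x ⬝ᵥ (G⁻¹ *ᵥ x) ≤ N * t := hbound
    have h1 : t * t ≤ (N * q) * t := by nlinarith
    have h2 : t ≤ N * q := le_of_mul_le_mul_right h1 htpos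
    calc N⁻¹ * t ≤ N⁻¹ * (N * q) := by
          exact mul_le_mul_of_nonneg_left h2 (inv_nonneg.mpr hNnn)
      _ = q := by field_simp

theorem corollary2_criterion {n m : ℕ}
    (A : Matrix (Fin n) (Fin n) ℝ) (B : Matrix (Fin n) (Fin m) ℝ)
    (hA : (-A).PosDef) (hAsym : Aᵀ = A) :
    let G : Matrix (Fin n) (Fin n) ℝ := A * A + B * Bᵀ
    ∀ ω : ℝ,
      ((ω ^ 2) • (A * G⁻¹ * A) + G - (specNorm G⁻¹)⁻¹ • (1 : Matrix (Fin n) (Fin n) ℝ)).PosSemidef := by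
  intro G ω
  -- A is invertible
  have hAunit : IsUnit A.det := by
    have := hA.det_pos.ne'.isUnit
    rw [Matrix.det_neg] at this
    exact (IsUnit.mul_iff.mp this).2
  -- A * A is positive definite
  have hAA : (A * A).PosDef := by
    refine Matrix.posDef_iff_dotProduct_mulVec.mpr ⟨?_, ?_⟩
    · simp only [Matrix.IsHermitian, Matrix.conjTranspose_mul,
        Matrix.conjTranspose_eq_transpose_of_trivial, Matrix.transpose_mul, hAsym]
    · intro x hx
      have hAx : A *ᵥ x ≠ 0 := by
        intro h
        exact hx (Matrix.eq_zero_of_mulVec_eq_zero hAunit.ne_zero h)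
      have key : star x ⬝ᵥ ((A * A) *ᵥ x) = (A *ᵥ x) ⬝ᵥ (A *ᵥ x) := by
        have hxs : star x = x := by simp
        rw [hxs, ← Matrix.mulVec_mulVec, Matrix.dotProduct_mulVec x, ← hAsym,
          Matrix.vecMul_transpose, hAsym]
      rw [key]
      have := Matrix.dotProduct_star_self_pos_iff.mpr hAx
      simpa using this
  have hBB : (B * Bᵀ).PosSemidef := by
    have := Matrix.posSemidef_self_mul_conjTranspose B
    rwa [Matrix.conjTranspose_eq_transpose_of_trivial] at this
  have hG : G.PosDef := hAA.add_posSemidef hBB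
  -- the middle term
  have hmid : (A * G⁻¹ * A).PosSemidef := by
    have := hG.inv.posSemidef.conjTranspose_mul_mul_same A
    rwa [Matrix.conjTranspose_eq_transpose_of_trivial, hAsym] at this
  have hsmul : ((ω ^ 2) • (A * G⁻¹ * A)).PosSemidef := by
    refine Matrix.posSemidef_iff_dotProduct_mulVec.mpr ⟨?_, ?_⟩
    · rw [Matrix.IsHermitian, Matrix.conjTranspose_smul]
      rw [hmid.isHermitian]
      norm_num
    · intro x
      rw [Matrix.smul_mulVec, dotProduct_smul, smul_eq_mul]
      exact mul_nonneg (by positivity) (by simpa using hmid.dotProduct_mulVec_nonneg x)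
  have hkey := key_lemma hG
  have : (ω ^ 2) • (A * G⁻¹ * A) + G - (specNorm G⁻¹)⁻¹ • (1 : Matrix (Fin n) (Fin n) ℝ)
      = (ω ^ 2) • (A * G⁻¹ * A) + (G - (specNorm G⁻¹)⁻¹ • (1 : Matrix (Fin n) (Fin n) ℝ)) := by
    abel
  rw [this]
  exact hsmul.add hkey
end
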